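/- Let k > 0 real, C = C_R + iC_I with C_R > 0, C_I < 0. With coefficients g₋₊ = g₊₋ = E₀(1+N)/4 and g₋₋ = g₊₊ = E₀(1−N)/4 where N = c₀/C is non-real and E₀ ∈ ℝ, E₀ ≠ 0, the field E_x(t,z) = g₋₊ e^{ik(−Ct+z)} + g₋₋ e^{ik(−Ct−z)} + g₊₋ e^{ik(Ct−z)} + g₊₊ e^{ik(Ct+z)} is not real-valued for all (t,z); i.e., there exist t, z with Im(E_x(t,z)) ≠ 0. -/

import Mathlib

open Complex

theorem constant_complex_CR_field_not_real
    (E₀ k C_R C_I c₀ : ℝ) (C N : ℂ)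
    (hE₀ : E₀ ≠ 0) (hk : 0 < k) (hc₀ : 0 < c₀)
    (hC : C = (C_R : ℂ) + (C_I : ℂ) * Complex.I) (hCR : 0 < C_R) (hCI : C_I < 0)
    (hN : N = (c₀ : ℂ) / C) (hNim : N.im ≠ 0) :
    ∃ t z : ℝ,
      (((E₀ : ℂ) * (1 + N) / 4) * Complex.exp (Complex.I * (k : ℂ) * (-(C * (t : ℂ)) + (z : ℂ)))
        + ((E₀ : ℂ) * (1 - N) / 4) * Complex.exp (Complex.I * (k : ℂ) * (-(C * (t : ℂ)) - (z : ℂ)))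
        + ((E₀ : ℂ) * (1 + N) / 4) * Complex.exp (Complex.I * (k : ℂ) * (C * (t : ℂ) - (z : ℂ)))
        + ((E₀ : ℂ) * (1 - N) / 4) * Complex.exp (Complex.I * (k : ℂ) * (C * (t : ℂ) + (z : ℂ)))).im
        ≠ 0 := by
  set t : ℝ := Real.pi / (2 * k * C_R) with htdef
  refine ⟨t, 0, ?_⟩
  have hE : (((E₀ : ℂ) * (1 + N) / 4) * Complex.exp (Complex.I * (k : ℂ) * (-(C * (t : ℂ)) + ((0:ℝ) : ℂ)))
        + ((E₀ : ℂ) * (1 - N) / 4) * Complex.exp (Complex.I * (k : ℂ) * (-(C * (t : ℂ)) - ((0:ℝ) : ℂ)))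
        + ((E₀ : ℂ) * (1 + N) / 4) * Complex.exp (Complex.I * (k : ℂ) * (C * (t : ℂ) - ((0:ℝ) : ℂ)))
        + ((E₀ : ℂ) * (1 - N) / 4) * Complex.exp (Complex.I * (k : ℂ) * (C * (t : ℂ) + ((0:ℝ) : ℂ))))
      = (E₀:ℂ)/2 * (Complex.exp (Complex.I * (k:ℂ) * (-(C * (t:ℂ)))) + Complex.exp (Complex.I * (k:ℂ) * (C * (t:ℂ)))) := by
    simp only [Complex.ofReal_zero, add_zero, sub_zero]
    ring
  rw [hE]
  have har1 : (Complex.I * (k:ℂ) * (-(C * (t:ℂ)))).re = k * C_I * t := by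
    simp [hC]; ring
  have hai1 : (Complex.I * (k:ℂ) * (-(C * (t:ℂ)))).im = -(k * C_R * t) := by
    simp [hC]; ring
  have har2 : (Complex.I * (k:ℂ) * (C * (t:ℂ))).re = -(k * C_I * t) := by
    simp [hC]; ring
  have hai2 : (Complex.I * (k:ℂ) * (C * (t:ℂ))).im = k * C_R * t := by
    simp [hC]; ring
  have ha : k * C_R * t = Real.pi / 2 := by
    field_simp [htdef]
    rw [htdef]; field_simp [hk.ne', hCR.ne']
  have him : ((E₀:ℂ)/2 * (Complex.exp (Complex.I * (k:ℂ) * (-(C * (t:ℂ)))) + Complex.exp (Complex.I * (k:ℂ) * (C * (t:ℂ))))).im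
      = E₀/2 * (Real.exp (k * C_I * t) * Real.sin (-(k * C_R * t)) + Real.exp (-(k * C_I * t)) * Real.sin (k * C_R * t)) := by
    simp [Complex.add_im, Complex.mul_im, Complex.exp_im, Complex.exp_re, har1, hai1, har2, hai2, Complex.div_im, Complex.div_re]
  rw [him, ha]
  simp only [Real.sin_neg, Real.sin_pi_div_two]
  have hb : k * C_I * t < 0 := by
    have ht : 0 < t := by
      apply div_pos Real.pi_pos
      positivity
    have := mul_pos hk ht
    nlinarith
  have : Real.exp (k * C_I * t) < Real.exp (-(k * C_I * t)) := by
    apply Real.exp_lt_exp.2; linarith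
  intro h
  have h2 : Real.exp (k * C_I * t) * (-1) + Real.exp (-(k * C_I * t)) * 1 ≠ 0 := by nlinarith
  rcases mul_eq_zero.1 h with h3 | h3
  · exact hE₀ (by linarith)
  · exact h2 h3
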